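/- Let d ≥ 2, let T be an infinite d-ary rooted tree, and let G be an abelian subgroup of Aut(T). Then the Minkowski dimension of (the closure of) G exists and dim(G) = 0. -/

import Mathlib

open scoped Classical

noncomputable section

/-! ### Minkowski dimension machinery for groups of automorphisms of rooted trees

A rooted tree is presented by its levels `V 0, V 1, V 2, …` (with `V 0` the root level)
together with parent maps `V (n+1) → V n`.  An automorphism is a family of permutations
of the levels commuting with the parent maps; it is in particular determined by a point of
`∀ k, Equiv.Perm (V k)`.  The restriction `r_n σ` of `σ` to the height-`n` subtree is the
tuple `(σ 0, …, σ n)`, and the natural metric is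
`d(σ,τ) = inf { d!^{-(dⁿ-1)/(d-1)} : r_n σ = r_n τ }`. -/

/-- The exponent `(dⁿ - 1)/(d - 1) = 1 + d + ⋯ + d^(n-1)`. -/
def scaleExp (d n : ℕ) : ℕ := ∑ i ∈ Finset.range n, d ^ i

/-- The scale `ε_n = d!^{-(dⁿ-1)/(d-1)}`, i.e. `1/|Aut(Tₙᶜᵒᵐ)|`. -/
def treeScale (d n : ℕ) : ℝ := ((d.factorial : ℝ) ^ scaleExp d n)⁻¹

/-- Two families of level permutations restrict to the same automorphism of the
height-`n` subtree. -/
def AgreeUpTo {V : ℕ → Type*} (n : ℕ) (σ τ : ∀ k, Equiv.Perm (V k)) : Prop :=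
  ∀ k, k ≤ n → σ k = τ k

/-- The natural metric on automorphisms of a rooted `d`-ary tree:
`d(σ,τ) = inf { d!^{-(dⁿ-1)/(d-1)} : σ and τ agree on the height-n subtree }`. -/
def treeDist {V : ℕ → Type*} (d : ℕ) (σ τ : ∀ k, Equiv.Perm (V k)) : ℝ :=
  sInf {x : ℝ | ∃ n : ℕ, AgreeUpTo n σ τ ∧ x = treeScale d n}

/-- `N_{ε_n}(G)`: the least number of balls of radius `ε_n = treeScale d n` needed to
cover `G`. -/
def coverNum {V : ℕ → Type*} (d : ℕ) (G : Set (∀ k, Equiv.Perm (V k))) (n : ℕ) : ℕ :=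
  sInf {m : ℕ | ∃ s : Finset (∀ k, Equiv.Perm (V k)), s.card = m ∧
    G ⊆ ⋃ σ ∈ s, {τ | treeDist d σ τ ≤ treeScale d n}}

/-- The lower Minkowski dimension `liminf_{ε → 0} log N_ε(G) / log (1/ε)` (computed
along the scales `ε_n` of the metric). -/
def dimLower {V : ℕ → Type*} (d : ℕ) (G : Set (∀ k, Equiv.Perm (V k))) : ℝ :=
  Filter.liminf
    (fun n : ℕ => Real.log (coverNum d G n : ℝ) / Real.log (1 / treeScale d n)) Filter.atTop

/-- The upper Minkowski dimension `limsup_{ε → 0} log N_ε(G) / log (1/ε)` (computed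
along the scales `ε_n` of the metric). -/
def dimUpper {V : ℕ → Type*} (d : ℕ) (G : Set (∀ k, Equiv.Perm (V k))) : ℝ :=
  Filter.limsup
    (fun n : ℕ => Real.log (coverNum d G n : ℝ) / Real.log (1 / treeScale d n)) Filter.atTop

/-- The Minkowski dimension of `G` exists and equals `x`. -/
def HasDim {V : ℕ → Type*} (d : ℕ) (G : Set (∀ k, Equiv.Perm (V k))) (x : ℝ) : Prop :=
  dimLower d G = x ∧ dimUpper d G = x

/-- `G` is closed for the natural metric. -/
def IsDistClosed {V : ℕ → Type*} (d : ℕ) (G : Set (∀ k, Equiv.Perm (V k))) : Prop :=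
  ∀ σ, (∀ ε : ℝ, 0 < ε → ∃ τ ∈ G, treeDist d σ τ ≤ ε) → σ ∈ G

/-- The closure of `G` for the natural metric. -/
def distClosure {V : ℕ → Type*} (d : ℕ) (G : Set (∀ k, Equiv.Perm (V k))) :
    Set (∀ k, Equiv.Perm (V k)) :=
  {σ | ∀ ε : ℝ, 0 < ε → ∃ τ ∈ G, treeDist d σ τ ≤ ε}

/-- `|r_n(G)|`: the cardinality of the restriction of `G` to the height-`n` subtree. -/
def levelCard {V : ℕ → Type*} (G : Set (∀ k, Equiv.Perm (V k))) (n : ℕ) : ℕ :=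
  Nat.card ((fun (σ : ∀ k, Equiv.Perm (V k)) (k : Fin (n + 1)) => σ k.1) '' G)

end
noncomputable section

/-- An infinite `d`-ary rooted tree, presented by its levels: `V n` is the set of
level-`n` vertices, `parent` maps a vertex to its parent, there is a unique root,
and every vertex has at least `1` and at most `d` children. -/
structure DaryTree (d : ℕ) where
  V : ℕ → Type
  parent : ∀ n, V (n + 1) → V n
  root_card : Nat.card (V 0) = 1
  child_lb : ∀ n (v : V n), 1 ≤ Nat.card {w : V (n + 1) // parent n w = v}
  child_ub : ∀ n (v : V n), Nat.card {w : V (n + 1) // parent n w = v} ≤ d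

/-- The group of automorphisms of a rooted tree presented by levels and parent maps:
families of level permutations fixing the root level structure and commuting with
the parent maps. -/
def autGroup {V : ℕ → Type*} (parent : ∀ n, V (n + 1) → V n) :
    Subgroup (∀ n, Equiv.Perm (V n)) where
  carrier := {σ | ∀ n (v : V (n + 1)), parent n (σ (n + 1) v) = σ n (parent n v)}
  one_mem' := by intro n v; rfl
  mul_mem' := by
    intro a b ha hb n v
    simp only [Pi.mul_apply, Equiv.Perm.mul_apply]
    rw [ha, hb]
  inv_mem' := by
    intro a ha n v
    simp only [Pi.inv_apply]
    have h := ha n ((a (n + 1))⁻¹ v)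
    rw [show (a (n + 1)) ((a (n + 1))⁻¹ v) = v from Equiv.apply_symm_apply _ _] at h
    rw [h]; exact (Equiv.symm_apply_apply _ _).symm

/-- The automorphism group `Aut(T)` of an infinite `d`-ary rooted tree. -/
def DaryTree.aut {d : ℕ} (T : DaryTree d) : Subgroup (∀ n, Equiv.Perm (T.V n)) :=
  autGroup T.parent

/-- A `d`-ary rooted tree is complete if every vertex has exactly `d` children. -/
def DaryTree.IsComplete {d : ℕ} (T : DaryTree d) : Prop :=
  ∀ n (v : T.V n), Nat.card {w : T.V (n + 1) // T.parent n w = v} = d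

end
namespace ArbAb

open Finset

/-! ### Part 0: metric lemmas -/

lemma scaleExp_strictMono {d : ℕ} (hd : 1 ≤ d) : StrictMono (scaleExp d) := by
  intro m n h
  unfold scaleExp
  apply Finset.sum_lt_sum_of_subset (Finset.range_subset_range.mpr h.le)
    (i := m) (by simpa using h) (by simp) (by positivity)
  intro j _ _
  positivity

lemma scaleExp_ge {d n : ℕ} (hn : 1 ≤ n) : d ^ (n - 1) ≤ scaleExp d n := by
  apply Finset.single_le_sum (f := fun i => d ^ i)
  · intro i _; positivity
  · simp [Finset.mem_range]; omega

lemma one_lt_factorial_real {d : ℕ} (hd : 2 ≤ d) : (1 : ℝ) < (d.factorial : ℝ) := by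
  have h2 : 2 ≤ d.factorial := by
    calc 2 = Nat.factorial 2 := rfl
    _ ≤ d.factorial := Nat.factorial_le hd
  exact_mod_cast by omega

lemma treeScale_pos {d : ℕ} (hd : 2 ≤ d) (n : ℕ) : 0 < treeScale d n := by
  unfold treeScale
  have := one_lt_factorial_real hd
  positivity

lemma treeScale_le_one {d : ℕ} (hd : 2 ≤ d) (n : ℕ) : treeScale d n ≤ 1 := by
  unfold treeScale
  rw [inv_le_one_iff₀]
  right
  exact one_le_pow₀ (one_lt_factorial_real hd).le

lemma treeScale_lt {d : ℕ} (hd : 2 ≤ d) {m n : ℕ} (h : m < n) :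
    treeScale d n < treeScale d m := by
  unfold treeScale
  have h1 := one_lt_factorial_real hd
  apply inv_strictAnti₀
  · positivity
  · exact pow_lt_pow_right₀ h1 (scaleExp_strictMono (by omega) h)

lemma treeScale_antitone {d : ℕ} (hd : 2 ≤ d) {m n : ℕ} (h : m ≤ n) :
    treeScale d n ≤ treeScale d m := by
  rcases h.lt_or_eq with h | rfl
  · exact (treeScale_lt hd h).le
  · exact le_refl _

end ArbAb
namespace ArbAb
open Finset

/-! ### Part 0b: agreement and distance -/

section agree
variable {V : ℕ → Type*} {d : ℕ}

lemma agree_symm {n : ℕ} {σ τ : ∀ k, Equiv.Perm (V k)} (h : AgreeUpTo n σ τ) :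
    AgreeUpTo n τ σ := fun k hk => (h k hk).symm

lemma agree_trans {n : ℕ} {σ τ ρ : ∀ k, Equiv.Perm (V k)} (h : AgreeUpTo n σ τ)
    (h' : AgreeUpTo n τ ρ) : AgreeUpTo n σ ρ := fun k hk => (h k hk).trans (h' k hk)

lemma treeDist_le_of_agree {n : ℕ} {σ τ : ∀ k, Equiv.Perm (V k)} (hd : 2 ≤ d)
    (h : AgreeUpTo n σ τ) : treeDist d σ τ ≤ treeScale d n := by
  apply csInf_le
  · refine ⟨0, ?_⟩
    rintro x ⟨m, -, rfl⟩
    exact (treeScale_pos hd m).le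
  · exact ⟨n, h, rfl⟩

lemma agree_of_treeDist_le {n : ℕ} {σ τ : ∀ k, Equiv.Perm (V k)} (hd : 2 ≤ d)
    (h0 : σ 0 = τ 0) (h : treeDist d σ τ ≤ treeScale d n) : AgreeUpTo n σ τ := by
  by_contra hn
  have hagree0 : AgreeUpTo 0 σ τ := by
    intro k hk; interval_cases k; exact h0
  have hn0 : n ≠ 0 := by rintro rfl; exact hn hagree0
  -- every agreeing level is < n
  have hlb : treeScale d (n-1) ≤ treeDist d σ τ := by
    apply le_csInf
    · exact ⟨treeScale d 0, 0, hagree0, rfl⟩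
    · rintro x ⟨m, hm, rfl⟩
      have hmn : m ≤ n - 1 := by
        by_contra hmb
        exact hn (fun k hk => hm k (by omega))
      exact treeScale_antitone hd hmn
  have := lt_irrefl (treeScale d (n-1))
    (lt_of_le_of_lt (hlb.trans h) (treeScale_lt hd (by omega)))
  exact this

end agree
end ArbAb
namespace ArbAb
open Finset

/-! ### Part 1: finiteness of levels -/

variable {d : ℕ}

lemma finite_fiber (T : DaryTree d) (n : ℕ) (v : T.V n) :
    Finite {w : T.V (n+1) // T.parent n w = v} :=
  (Nat.card_pos_iff.mp (lt_of_lt_of_le Nat.zero_lt_one (T.child_lb n v))).2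

lemma nonempty_fiber (T : DaryTree d) (n : ℕ) (v : T.V n) :
    Nonempty {w : T.V (n+1) // T.parent n w = v} :=
  (Nat.card_pos_iff.mp (lt_of_lt_of_le Nat.zero_lt_one (T.child_lb n v))).1

lemma finite_V (T : DaryTree d) : ∀ n, Finite (T.V n)
  | 0 => (Nat.card_pos_iff.mp (by rw [T.root_card]; norm_num)).2
  | (n+1) => by
      haveI := finite_V T n
      haveI : ∀ v : T.V n, Finite {w : T.V (n+1) // T.parent n w = v} := finite_fiber T n
      exact Finite.of_equiv _ (Equiv.sigmaFiberEquiv (T.parent n))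

lemma nonempty_V (T : DaryTree d) : ∀ n, Nonempty (T.V n)
  | 0 => (Nat.card_pos_iff.mp (by rw [T.root_card]; norm_num)).1
  | (n+1) => by
      obtain ⟨v⟩ := nonempty_V T n
      obtain ⟨w, -⟩ := nonempty_fiber T n v
      exact ⟨w⟩

noncomputable instance instFintypeV {T : DaryTree d} {n : ℕ} : Fintype (T.V n) :=
  @Fintype.ofFinite _ (finite_V T n)

instance instNonemptyV {T : DaryTree d} {n : ℕ} : Nonempty (T.V n) := nonempty_V T n

instance instSubsingletonV0 {T : DaryTree d} : Subsingleton (T.V 0) :=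
  Nat.card_eq_one_iff_unique.mp T.root_card |>.1

instance instSubsingletonPerm0 {T : DaryTree d} : Subsingleton (Equiv.Perm (T.V 0)) :=
  ⟨fun a b => Equiv.ext fun x => Subsingleton.elim _ _⟩

/-- the fiber over `v` as a Finset -/
noncomputable def fiberF (T : DaryTree d) (n : ℕ) (v : T.V n) : Finset (T.V (n+1)) :=
  Finset.univ.filter (fun w => T.parent n w = v)

lemma fiberF_card (T : DaryTree d) (n : ℕ) (v : T.V n) :
    (fiberF T n v).card = Nat.card {w : T.V (n+1) // T.parent n w = v} := by
  rw [Nat.card_eq_fintype_card, Fintype.card_subtype]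
  rfl

lemma fiberF_card_pos (T : DaryTree d) (n : ℕ) (v : T.V n) : 0 < (fiberF T n v).card := by
  rw [fiberF_card]; exact lt_of_lt_of_le Nat.zero_lt_one (T.child_lb n v)

lemma fiberF_card_le (T : DaryTree d) (n : ℕ) (v : T.V n) : (fiberF T n v).card ≤ d := by
  rw [fiberF_card]; exact T.child_ub n v

end ArbAb
namespace ArbAb
open Finset
noncomputable section

/-! ### Part 2: moved vertices, M-counter, orbits, active vertices -/

variable {d : ℕ} (T : DaryTree d) (G : Subgroup (∀ n, Equiv.Perm (T.V n)))

/-- `w` (a level `n+1` vertex) is moved by some element trivial through level `n`. -/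
def Moved (n : ℕ) (w : T.V (n+1)) : Prop :=
  ∃ π ∈ G, (∀ j, j ≤ n → π j = 1) ∧ π (n+1) w ≠ w

/-- number of moved weak ancestors -/
def Mc : ∀ n, T.V n → ℕ
  | 0, _ => 0
  | (n+1), w => Mc n (T.parent n w) + (if Moved T G n w then 1 else 0)

/-- orbit relation at level n -/
def orb (n : ℕ) (v w : T.V n) : Prop := ∃ g ∈ G, g n v = w

lemma orb_refl (n : ℕ) (v : T.V n) : orb T G n v v := ⟨1, one_mem G, rfl⟩

lemma orb_symm {n : ℕ} {v w : T.V n} (h : orb T G n v w) : orb T G n w v := by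
  obtain ⟨g, hg, rfl⟩ := h
  exact ⟨g⁻¹, inv_mem hg, by simp [Pi.inv_apply]⟩

lemma orb_trans {n : ℕ} {u v w : T.V n} (h : orb T G n u v) (h' : orb T G n v w) :
    orb T G n u w := by
  obtain ⟨g, hg, rfl⟩ := h
  obtain ⟨g', hg', rfl⟩ := h'
  exact ⟨g' * g, mul_mem hg' hg, rfl⟩

/-- orbit of `v` as a Finset -/
def orbF (n : ℕ) (v : T.V n) : Finset (T.V n) :=
  Finset.univ.filter (orb T G n v)

lemma mem_orbF {n : ℕ} {v w : T.V n} : w ∈ orbF T G n v ↔ orb T G n v w := by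
  simp [orbF]

lemma self_mem_orbF {n : ℕ} (v : T.V n) : v ∈ orbF T G n v :=
  (mem_orbF T G).mpr (orb_refl T G n v)

lemma orbF_eq_of_orb {n : ℕ} {v w : T.V n} (h : orb T G n v w) :
    orbF T G n v = orbF T G n w := by
  ext u
  simp only [mem_orbF]
  exact ⟨fun h' => orb_trans T G (orb_symm T G h) h', fun h' => orb_trans T G h h'⟩

lemma orbF_card_pos {n : ℕ} (v : T.V n) : 0 < (orbF T G n v).card :=
  Finset.card_pos.mpr ⟨v, self_mem_orbF T G v⟩

/-- `v` is active at transition `n` if it has a moved child. -/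
def ActiveV (n : ℕ) (v : T.V n) : Prop :=
  ∃ w : T.V (n+1), T.parent n w = v ∧ Moved T G n w

end
end ArbAb
namespace ArbAb
open Finset
noncomputable section

variable {d : ℕ} {T : DaryTree d} {G : Subgroup (∀ n, Equiv.Perm (T.V n))}

/-! ### Part 3: orbit growth -/

lemma parent_apply (hG : G ≤ T.aut) {g : ∀ n, Equiv.Perm (T.V n)} (hg : g ∈ G)
    (n : ℕ) (w : T.V (n+1)) : T.parent n (g (n+1) w) = g n (T.parent n w) :=
  hG hg n w

lemma mul_apply_level {g h : ∀ n, Equiv.Perm (T.V n)} (n : ℕ) (v : T.V n) :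
    (g * h) n v = g n (h n v) := rfl

lemma inv_apply_level {g : ∀ n, Equiv.Perm (T.V n)} (n : ℕ) (v : T.V n) :
    (g⁻¹) n v = (g n)⁻¹ v := rfl

/-- Key orbit-growth lemma: orbits are at least of size `2 ^ M`. -/
lemma two_pow_M_le_card_orb (hG : G ≤ T.aut)
    (hab : ∀ a ∈ G, ∀ b ∈ G, a * b = b * a) :
    ∀ (n : ℕ) (v : T.V n), 2 ^ (Mc T G n v) ≤ (orbF T G n v).card := by
  intro n
  induction n with
  | zero => intro v; simpa [Mc] using orbF_card_pos T G v
  | succ n ih =>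
    intro v
    set p := T.parent n v with hp
    by_cases hmv : Moved T G n v
    · -- moved case : card orb v ≥ 2 * card orb p
      obtain ⟨π, hπG, hπtriv, hπv⟩ := hmv
      classical
      set pick : T.V n → (∀ m, Equiv.Perm (T.V m)) := fun u =>
        if h : ∃ g ∈ G, g n p = u then h.choose else 1 with hpick
      have hpickG : ∀ u ∈ orbF T G n p, pick u ∈ G ∧ (pick u) n p = u := by
        intro u hu
        have h := (mem_orbF T G).mp hu
        have hpu : pick u = h.choose := by
          simp only [hpick]
          exact dif_pos h
        rw [hpu]
        exact ⟨h.choose_spec.1, h.choose_spec.2⟩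
      set F : T.V n × Bool → T.V (n+1) := fun x =>
        if x.2 then (pick x.1) (n+1) (π (n+1) v) else (pick x.1) (n+1) v with hF
      have hFt : ∀ u, F (u, true) = (pick u) (n+1) (π (n+1) v) := fun u => rfl
      have hFf : ∀ u, F (u, false) = (pick u) (n+1) v := fun u => rfl
      have hπp : T.parent n (π (n+1) v) = p := by
        rw [parent_apply hG hπG, hπtriv n le_rfl, ← hp]; rfl
      have hmaps : ∀ x ∈ (orbF T G n p) ×ˢ (Finset.univ : Finset Bool),
          F x ∈ orbF T G (n+1) v := by
        rintro ⟨u, b⟩ hx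
        rw [Finset.mem_product] at hx
        obtain ⟨hgG, hgp⟩ := hpickG u hx.1
        rcases b with _ | _
        · rw [hFf]
          exact (mem_orbF T G).mpr ⟨pick u, hgG, rfl⟩
        · rw [hFt]
          exact (mem_orbF T G).mpr ⟨pick u * π, mul_mem hgG hπG, rfl⟩
      have hparF : ∀ x ∈ (orbF T G n p) ×ˢ (Finset.univ : Finset Bool),
          T.parent n (F x) = x.1 := by
        rintro ⟨u, b⟩ hx
        rw [Finset.mem_product] at hx
        obtain ⟨hgG, hgp⟩ := hpickG u hx.1
        rcases b with _ | _
        · rw [hFf, parent_apply hG hgG, ← hp, hgp]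
        · rw [hFt, parent_apply hG hgG, hπp, hgp]
      have hinj : Set.InjOn F ((orbF T G n p) ×ˢ (Finset.univ : Finset Bool) : Finset _) := by
        rintro ⟨u, b⟩ hx ⟨u', b'⟩ hx' heq
        rw [Finset.mem_coe] at hx hx'
        have hu : u = u' := by
          have h1 := hparF ⟨u, b⟩ hx
          have h2 := hparF ⟨u', b'⟩ hx'
          rw [heq] at h1
          exact h1.symm.trans h2
        subst hu
        have hb : b = b' := by
          by_contra hbb
          have heq2 : (pick u) (n+1) v = (pick u) (n+1) (π (n+1) v) := by
            rcases b with _ | _ <;> rcases b' with _ | _ <;>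
              first
              | exact absurd rfl hbb
              | (rw [hFf, hFt] at heq; exact heq)
              | (rw [hFt, hFf] at heq; exact heq.symm)
          exact hπv ((Equiv.injective _ heq2).symm)
        rw [hb]
      have hcard := Finset.card_le_card_of_injOn F hmaps hinj
      rw [Finset.card_product, Finset.card_univ, Fintype.card_bool] at hcard
      have hmv2 : Moved T G n v := ⟨π, hπG, hπtriv, hπv⟩
      have hM : Mc T G (n+1) v = Mc T G n p + 1 := by
        show Mc T G n (T.parent n v) + (if Moved T G n v then 1 else 0) = _
        rw [if_pos hmv2, ← hp]
      rw [hM, pow_succ]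
      calc 2 ^ Mc T G n p * 2 ≤ (orbF T G n p).card * 2 :=
            Nat.mul_le_mul_right 2 (ih p)
        _ ≤ (orbF T G (n+1) v).card := hcard
    · -- unmoved case: parent surjects orbit of v onto orbit of p
      have hsurj : Set.SurjOn (T.parent n) (orbF T G (n+1) v : Set (T.V (n+1)))
          (orbF T G n p : Set (T.V n)) := by
        intro u hu
        obtain ⟨g, hgG, hgp⟩ := (mem_orbF T G).mp hu
        refine ⟨g (n+1) v, (mem_orbF T G).mpr ⟨g, hgG, rfl⟩, ?_⟩
        show T.parent n (g (n+1) v) = u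
        rw [parent_apply hG hgG, ← hp, hgp]
      have hcard := Finset.card_le_card_of_surjOn (T.parent n) hsurj
      have hM : Mc T G (n+1) v = Mc T G n p := by
        show Mc T G n (T.parent n v) + (if Moved T G n v then 1 else 0) = _
        rw [if_neg hmv, ← hp, Nat.add_zero]
      rw [hM]
      exact le_trans (ih p) hcard

end
end ArbAb
namespace ArbAb
open Finset
noncomputable section

/-! ### Part 4: counting restrictions -/

variable {d : ℕ} (T : DaryTree d) (G : Subgroup (∀ n, Equiv.Perm (T.V n)))

def PiPerm (T : DaryTree d) (n : ℕ) := ∀ j : Fin (n+1), Equiv.Perm (T.V j.1)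

instance : Finite (PiPerm T n) := by
  unfold PiPerm; infer_instance

noncomputable instance : Fintype (PiPerm T n) := Fintype.ofFinite _

def projT (n : ℕ) : (∀ k, Equiv.Perm (T.V k)) → PiPerm T n := fun σ j => σ j.1

def LF (n : ℕ) : Finset (PiPerm T n) :=
  Finset.univ.filter (fun x => x ∈ (projT T n) '' (G : Set (∀ k, Equiv.Perm (T.V k))))

def LN (n : ℕ) : ℕ := (LF T G n).card

def trunc (n : ℕ) : PiPerm T (n+1) → PiPerm T n := fun x j => x ⟨j.1, by omega⟩

def activeF (n : ℕ) : Finset (T.V n) := Finset.univ.filter (ActiveV T G n)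

def activeOrbs (n : ℕ) : Finset (Finset (T.V n)) := (activeF T G n).image (orbF T G n)

def aN (n : ℕ) : ℕ := (activeOrbs T G n).card

def repO (n : ℕ) (z : Finset (T.V n)) : T.V n :=
  if h : ∃ v, v ∈ z ∧ ActiveV T G n v then h.choose else Classical.arbitrary _

lemma repO_spec {n : ℕ} {z : Finset (T.V n)} (hz : z ∈ activeOrbs T G n) :
    repO T G n z ∈ z ∧ ActiveV T G n (repO T G n z) := by
  obtain ⟨v, hv, rfl⟩ := Finset.mem_image.mp hz
  have hva : ActiveV T G n v := (Finset.mem_filter.mp hv).2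
  have h : ∃ u, u ∈ orbF T G n v ∧ ActiveV T G n u := ⟨v, self_mem_orbF T G v, hva⟩
  rw [repO, dif_pos h]
  exact ⟨h.choose_spec.1, h.choose_spec.2⟩

lemma orb_repO {n : ℕ} {v : T.V n} (hv : ActiveV T G n v) :
    orbF T G n v ∈ activeOrbs T G n ∧ orb T G n (repO T G n (orbF T G n v)) v := by
  have hz : orbF T G n v ∈ activeOrbs T G n :=
    Finset.mem_image.mpr ⟨v, Finset.mem_filter.mpr ⟨Finset.mem_univ v, hv⟩, rfl⟩
  exact ⟨hz, orb_symm T G ((mem_orbF T G).mp (repO_spec T G hz).1)⟩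

end
end ArbAb
namespace ArbAb
open Finset
noncomputable section

variable {d : ℕ} {T : DaryTree d} {G : Subgroup (∀ n, Equiv.Perm (T.V n))}

/-! ### Part 5: kernel elements agreeing on fibers over representatives agree everywhere -/

lemma agree_on_fibers (hG : G ≤ T.aut) (hab : ∀ a ∈ G, ∀ b ∈ G, a * b = b * a)
    (n : ℕ) {g h : ∀ k, Equiv.Perm (T.V k)} (hgG : g ∈ G) (hhG : h ∈ G)
    (hgt : ∀ j, j ≤ n → g j = 1) (hht : ∀ j, j ≤ n → h j = 1)
    (hag : ∀ z ∈ activeOrbs T G n, ∀ w : T.V (n+1),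
      T.parent n w = repO T G n z → g (n+1) w = h (n+1) w) :
    ∀ w : T.V (n+1), g (n+1) w = h (n+1) w := by
  intro w
  set v := T.parent n w with hv
  by_cases hva : ActiveV T G n v
  · obtain ⟨hz, g₀orb⟩ := orb_repO T G hva
    obtain ⟨g₀, hg₀G, hg₀⟩ := orb_symm T G g₀orb
    -- g₀ n v = repO (orbF v)
    set u := g₀ (n+1) w with hu
    have hpu : T.parent n u = repO T G n (orbF T G n v) := by
      rw [hu, parent_apply hG hg₀G, ← hv, hg₀]
    have key := hag _ hz u hpu
    -- commute g with g₀
    have hcg : g (n+1) (g₀ (n+1) w) = g₀ (n+1) (g (n+1) w) := by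
      have := hab g hgG g₀ hg₀G
      have h2 : (g * g₀) (n+1) w = (g₀ * g) (n+1) w := by rw [this]
      exact h2
    have hch : h (n+1) (g₀ (n+1) w) = g₀ (n+1) (h (n+1) w) := by
      have := hab h hhG g₀ hg₀G
      have h2 : (h * g₀) (n+1) w = (g₀ * h) (n+1) w := by rw [this]
      exact h2
    rw [← hu] at hcg hch
    have : g₀ (n+1) (g (n+1) w) = g₀ (n+1) (h (n+1) w) := by
      rw [← hcg, ← hch, key]
    exact Equiv.injective _ this
  · -- inactive: both fix w
    have hgw : g (n+1) w = w := by
      by_contra hne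
      exact hva ⟨w, hv.symm, g, hgG, hgt, hne⟩
    have hhw : h (n+1) w = w := by
      by_contra hne
      exact hva ⟨w, hv.symm, h, hhG, hht, hne⟩
    rw [hgw, hhw]

end
end ArbAb
namespace ArbAb
open Finset
noncomputable section

variable {d : ℕ} {T : DaryTree d} {G : Subgroup (∀ n, Equiv.Perm (T.V n))}

/-! ### Part 6: the kernel counting bound -/

/-- target data type for the kernel injection -/
def KData (T : DaryTree d) (G : Subgroup (∀ n, Equiv.Perm (T.V n))) (n : ℕ) : Type :=
  ∀ _z : {z // z ∈ activeOrbs T G n},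
    ({w : T.V (n+1) // T.parent n w = repO T G n _z.1} →
     {w : T.V (n+1) // T.parent n w = repO T G n _z.1})

noncomputable instance (n : ℕ) : Fintype (KData T G n) := by
  unfold KData
  infer_instance

lemma card_KData_le (hd : 2 ≤ d) (n : ℕ) :
    Fintype.card (KData T G n) ≤ (d ^ d) ^ (aN T G n) := by
  have hcard : Fintype.card (KData T G n) = ∏ z : {z // z ∈ activeOrbs T G n},
      Fintype.card ({w : T.V (n+1) // T.parent n w = repO T G n z.1} →
        {w : T.V (n+1) // T.parent n w = repO T G n z.1}) := by
    unfold KData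
    exact Fintype.card_pi
  rw [hcard]
  have hfac : ∀ z : {z // z ∈ activeOrbs T G n},
      Fintype.card ({w : T.V (n+1) // T.parent n w = repO T G n z.1} →
        {w : T.V (n+1) // T.parent n w = repO T G n z.1}) ≤ d ^ d := by
    intro z
    rw [Fintype.card_fun]
    have hc : Fintype.card {w : T.V (n+1) // T.parent n w = repO T G n z.1} ≤ d := by
      rw [← Nat.card_eq_fintype_card]
      exact T.child_ub n _
    calc Fintype.card {w : T.V (n+1) // T.parent n w = repO T G n z.1} ^
          Fintype.card {w : T.V (n+1) // T.parent n w = repO T G n z.1}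
        ≤ d ^ Fintype.card {w : T.V (n+1) // T.parent n w = repO T G n z.1} :=
          Nat.pow_le_pow_left hc _
      _ ≤ d ^ d := Nat.pow_le_pow_right (by omega) hc
  calc (∏ z : {z // z ∈ activeOrbs T G n}, Fintype.card _)
      ≤ ∏ _z : {z // z ∈ activeOrbs T G n}, d ^ d := Finset.prod_le_prod' (fun z _ => hfac z)
    _ = (d ^ d) ^ (aN T G n) := by
        rw [Finset.prod_const, Finset.card_univ, Fintype.card_coe]
        rfl

end
end ArbAb
namespace ArbAb
open Finset
noncomputable section

variable {d : ℕ} {T : DaryTree d} {G : Subgroup (∀ n, Equiv.Perm (T.V n))}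

/-! ### Part 7: fibers of truncation are small -/

lemma card_fiber_trunc_le (hG : G ≤ T.aut) (hab : ∀ a ∈ G, ∀ b ∈ G, a * b = b * a)
    (hd : 2 ≤ d) (n : ℕ) (b : PiPerm T n) :
    ((LF T G (n+1)).filter (fun x => trunc T n x = b)).card ≤ (d ^ d) ^ (aN T G n) := by
  classical
  set Fb := (LF T G (n+1)).filter (fun x => trunc T n x = b) with hFbdef
  rcases Fb.eq_empty_or_nonempty with hFb | ⟨y₀, hy₀⟩
  · rw [hFb]; simp
  · have hmemFb : ∀ x ∈ Fb, x ∈ LF T G (n+1) ∧ trunc T n x = b := by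
      intro x hx; exact Finset.mem_filter.mp hx
    have hlift : ∀ x ∈ LF T G (n+1), ∃ ξ, ξ ∈ G ∧ projT T (n+1) ξ = x := by
      intro x hx
      obtain ⟨ξ, hξ, hproj⟩ := (Finset.mem_filter.mp hx).2
      exact ⟨ξ, hξ, hproj⟩
    set lift : PiPerm T (n+1) → (∀ k, Equiv.Perm (T.V k)) := fun x =>
      if h : ∃ ξ, ξ ∈ G ∧ projT T (n+1) ξ = x then h.choose else 1 with hliftdef
    have hliftspec : ∀ x ∈ LF T G (n+1), lift x ∈ G ∧ projT T (n+1) (lift x) = x := by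
      intro x hx
      have h := hlift x hx
      have : lift x = h.choose := by simp only [hliftdef]; exact dif_pos h
      rw [this]
      exact h.choose_spec
    set li : Fin (n+2) := ⟨n+1, by omega⟩ with hli
    -- component facts
    have hcomp : ∀ x ∈ Fb, ∀ j : ℕ, ∀ hj : j ≤ n, (lift x) j = b ⟨j, by omega⟩ := by
      intro x hx j hj
      obtain ⟨hxL, hxb⟩ := hmemFb x hx
      have h1 : (lift x) j = x ⟨j, by omega⟩ :=
        congrFun (hliftspec x hxL).2 ⟨j, by omega⟩
      have h2 : x ⟨j, by omega⟩ = b ⟨j, by omega⟩ := by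
        have := congrFun hxb ⟨j, by omega⟩
        exact this
      rw [h1, h2]
    have hlast : ∀ x ∈ Fb, (lift x) (n+1) = x li := by
      intro x hx
      exact congrFun (hliftspec x (hmemFb x hx).1).2 li
    -- the difference elements
    have hdiffG : ∀ x ∈ Fb, lift x * (lift y₀)⁻¹ ∈ G := fun x hx =>
      mul_mem (hliftspec x (hmemFb x hx).1).1 (inv_mem (hliftspec y₀ (hmemFb y₀ hy₀).1).1)
    have hdifftriv : ∀ x ∈ Fb, ∀ j, j ≤ n → (lift x * (lift y₀)⁻¹) j = 1 := by
      intro x hx j hj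
      show (lift x) j * ((lift y₀) j)⁻¹ = 1
      rw [hcomp x hx j hj, hcomp y₀ hy₀ j hj, mul_inv_cancel]
    have hdiffapply : ∀ x ∈ Fb, ∀ u : T.V (n+1),
        (lift x * (lift y₀)⁻¹) (n+1) u = (x li) (((y₀ li))⁻¹ u) := by
      intro x hx u
      show (lift x) (n+1) (((lift y₀) (n+1))⁻¹ u) = _
      rw [hlast x hx, hlast y₀ hy₀]
    -- define the injection
    set Φ : PiPerm T (n+1) → KData T G n := fun x z w =>
      if hm : T.parent n ((x li) (((y₀ li))⁻¹ w.1)) = repO T G n z.1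
      then ⟨(x li) (((y₀ li))⁻¹ w.1), hm⟩ else w with hΦdef
    have hcond : ∀ x ∈ Fb, ∀ (z : {z // z ∈ activeOrbs T G n})
        (w : {w : T.V (n+1) // T.parent n w = repO T G n z.1}),
        T.parent n ((x li) (((y₀ li))⁻¹ w.1)) = repO T G n z.1 := by
      intro x hx z w
      rw [← hdiffapply x hx w.1, parent_apply hG (hdiffG x hx),
        hdifftriv x hx n le_rfl, w.2]
      rfl
    have hΦval : ∀ x ∈ Fb, ∀ z w, (Φ x z w).1 = (x li) (((y₀ li))⁻¹ w.1) := by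
      intro x hx z w
      simp only [hΦdef, dif_pos (hcond x hx z w)]
    have hinj : Set.InjOn Φ (Fb : Set (PiPerm T (n+1))) := by
      intro x hx y hy heq
      rw [Finset.mem_coe] at hx hy
      -- agreement on representative fibers
      have hag : ∀ z ∈ activeOrbs T G n, ∀ w : T.V (n+1),
          T.parent n w = repO T G n z →
          (lift x * (lift y₀)⁻¹) (n+1) w = (lift y * (lift y₀)⁻¹) (n+1) w := by
        intro z hz w hw
        have h1 := hΦval x hx ⟨z, hz⟩ ⟨w, hw⟩
        have h2 := hΦval y hy ⟨z, hz⟩ ⟨w, hw⟩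
        rw [heq] at h1
        rw [hdiffapply x hx w, hdiffapply y hy w, ← h1, ← h2]
      have hall := agree_on_fibers hG hab n (hdiffG x hx) (hdiffG y hy)
        (hdifftriv x hx) (hdifftriv y hy) hag
      -- conclude x = y
      funext j
      obtain ⟨jv, hjv⟩ := j
      by_cases hj : jv < n + 1
      · have h1 : x ⟨jv, hjv⟩ = b ⟨jv, hj⟩ := congrFun (hmemFb x hx).2 ⟨jv, hj⟩
        have h2 : y ⟨jv, hjv⟩ = b ⟨jv, hj⟩ := congrFun (hmemFb y hy).2 ⟨jv, hj⟩
        rw [h1, h2]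
      · have hjv1 : jv = n + 1 := by omega
        subst hjv1
        have hxy : ∀ u : T.V (n+1), (x li) u = (y li) u := by
          intro u
          have e1 : (x li) u = (lift x * (lift y₀)⁻¹) (n+1) ((lift y₀) (n+1) ((x li).symm ((x li) u))) := by
            rw [hdiffapply x hx]
            rw [hlast y₀ hy₀]
            rw [Equiv.Perm.inv_eq_iff_eq.mpr rfl]
            rw [Equiv.symm_apply_apply]
          have e2 : (y li) u = (lift y * (lift y₀)⁻¹) (n+1) ((lift y₀) (n+1) u) := by
            rw [hdiffapply y hy]
            rw [hlast y₀ hy₀]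
            rw [Equiv.Perm.inv_eq_iff_eq.mpr rfl]
          rw [e2, ← hall ((lift y₀) (n+1) u), hdiffapply x hx, hlast y₀ hy₀,
            Equiv.Perm.inv_eq_iff_eq.mpr rfl]
        exact Equiv.ext hxy
    have hmapsto : ∀ x ∈ Fb, Φ x ∈ (Finset.univ : Finset (KData T G n)) :=
      fun x _ => Finset.mem_univ _
    calc Fb.card ≤ (Finset.univ : Finset (KData T G n)).card :=
          Finset.card_le_card_of_injOn Φ hmapsto hinj
      _ = Fintype.card (KData T G n) := Finset.card_univ
      _ ≤ (d ^ d) ^ (aN T G n) := card_KData_le hd n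

end
end ArbAb
namespace ArbAb
open Finset
noncomputable section

variable {d : ℕ} {T : DaryTree d} {G : Subgroup (∀ n, Equiv.Perm (T.V n))}

/-! ### Part 8: LN growth -/

lemma trunc_mem_LF {n : ℕ} {x : PiPerm T (n+1)} (hx : x ∈ LF T G (n+1)) :
    trunc T n x ∈ LF T G n := by
  obtain ⟨ξ, hξ, rfl⟩ := (Finset.mem_filter.mp hx).2
  exact Finset.mem_filter.mpr ⟨Finset.mem_univ _, ⟨ξ, hξ, rfl⟩⟩

lemma LN_succ_le (hG : G ≤ T.aut) (hab : ∀ a ∈ G, ∀ b ∈ G, a * b = b * a)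
    (hd : 2 ≤ d) (n : ℕ) :
    LN T G (n+1) ≤ (d ^ d) ^ (aN T G n) * LN T G n := by
  classical
  apply Finset.card_le_mul_card_image_of_maps_to
    (f := trunc T n) (t := LF T G n) (fun x hx => trunc_mem_LF hx)
  intro b _
  exact card_fiber_trunc_le hG hab hd n b

lemma LN_zero_le : LN T G 0 ≤ 1 := by
  have hsub : Subsingleton (PiPerm T 0) := by
    constructor
    intro f g
    funext j
    have hj : j = ⟨0, Nat.zero_lt_one⟩ := by
      ext
      omega
    subst hj
    exact Subsingleton.elim _ _
  calc LN T G 0 ≤ (Finset.univ : Finset (PiPerm T 0)).card := Finset.card_filter_le _ _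
    _ = Fintype.card (PiPerm T 0) := Finset.card_univ
    _ ≤ 1 := Fintype.card_le_one_iff_subsingleton.mpr hsub

lemma LN_le (hG : G ≤ T.aut) (hab : ∀ a ∈ G, ∀ b ∈ G, a * b = b * a)
    (hd : 2 ≤ d) (n : ℕ) :
    LN T G n ≤ (d ^ d) ^ (∑ k ∈ Finset.range n, aN T G k) := by
  induction n with
  | zero => simpa using LN_zero_le
  | succ n ih =>
    calc LN T G (n+1) ≤ (d ^ d) ^ (aN T G n) * LN T G n := LN_succ_le hG hab hd n
      _ ≤ (d ^ d) ^ (aN T G n) * (d ^ d) ^ (∑ k ∈ Finset.range n, aN T G k) :=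
          Nat.mul_le_mul_left _ ih
      _ = (d ^ d) ^ (∑ k ∈ Finset.range (n+1), aN T G k) := by
          rw [← pow_add, Finset.sum_range_succ]
          ring_nf

end
end ArbAb
namespace ArbAb
open Finset
noncomputable section

variable {d : ℕ} {T : DaryTree d} {G : Subgroup (∀ n, Equiv.Perm (T.V n))}

/-! ### Part 9: covering number bounded by number of restrictions -/

lemma coverNum_le_LN (hd : 2 ≤ d) (n : ℕ) :
    coverNum d (distClosure d (G : Set (∀ k, Equiv.Perm (T.V k)))) n ≤ LN T G n := by
  classical
  set lift : PiPerm T n → (∀ k, Equiv.Perm (T.V k)) := fun x =>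
    if h : ∃ ξ, ξ ∈ G ∧ projT T n ξ = x then h.choose else 1 with hliftdef
  have hliftspec : ∀ x ∈ LF T G n, lift x ∈ G ∧ projT T n (lift x) = x := by
    intro x hx
    obtain ⟨ξ, hξ, hproj⟩ := (Finset.mem_filter.mp hx).2
    have h : ∃ ξ, ξ ∈ G ∧ projT T n ξ = x := ⟨ξ, hξ, hproj⟩
    have : lift x = h.choose := by simp only [hliftdef]; exact dif_pos h
    rw [this]
    exact h.choose_spec
  set s : Finset (∀ k, Equiv.Perm (T.V k)) := (LF T G n).image lift with hsdef
  have hcover : distClosure d (G : Set (∀ k, Equiv.Perm (T.V k))) ⊆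
      ⋃ σ ∈ s, {τ | treeDist d σ τ ≤ treeScale d n} := by
    intro τ hτ
    obtain ⟨g, hgG, hdist⟩ := hτ (treeScale d n) (treeScale_pos hd n)
    have hagree : AgreeUpTo n τ g :=
      agree_of_treeDist_le hd (Subsingleton.elim _ _) hdist
    have hgL : projT T n g ∈ LF T G n :=
      Finset.mem_filter.mpr ⟨Finset.mem_univ _, ⟨g, hgG, rfl⟩⟩
    set c := lift (projT T n g) with hcdef
    have hcg : AgreeUpTo n c g := by
      intro k hk
      exact congrFun (hliftspec _ hgL).2 ⟨k, by omega⟩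
    have hcτ : AgreeUpTo n c τ := agree_trans hcg (agree_symm hagree)
    refine Set.mem_iUnion₂.mpr ⟨c, ?_, ?_⟩
    · exact Finset.mem_image.mpr ⟨projT T n g, hgL, rfl⟩
    · exact treeDist_le_of_agree hd hcτ
  calc coverNum d (distClosure d (G : Set (∀ k, Equiv.Perm (T.V k)))) n
      ≤ s.card := Nat.sInf_le ⟨s, rfl, hcover⟩
    _ ≤ LN T G n := Finset.card_image_le

end
end ArbAb
namespace ArbAb
open Finset
noncomputable section

variable {d : ℕ} (T : DaryTree d) (G : Subgroup (∀ n, Equiv.Perm (T.V n)))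

/-! ### Part 10: the potential function -/

def mu : ∀ n, T.V n → ℝ
  | 0, _ => 1
  | (n+1), w => mu n (T.parent n w) / ((fiberF T n (T.parent n w)).card : ℝ)

def movedF (k : ℕ) : Finset (T.V (k+1)) := Finset.univ.filter (Moved T G k)

def Uk (k : ℕ) : ℝ := ∑ w ∈ movedF T G k, (2⁻¹ : ℝ) ^ (Mc T G (k+1) w)

def Dk (k : ℕ) : ℝ := ∑ w ∈ movedF T G k, mu T (k+1) w * (2⁻¹ : ℝ) ^ (Mc T G (k+1) w)

def Sk (n : ℕ) : ℝ := ∑ v : T.V n, mu T n v * (2⁻¹ : ℝ) ^ (Mc T G n v)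

lemma mu_pos : ∀ n, ∀ v : T.V n, 0 < mu T n v
  | 0, v => one_pos
  | (n+1), w => by
      have h1 := mu_pos n (T.parent n w)
      have h2 : (0:ℝ) < ((fiberF T n (T.parent n w)).card : ℝ) := by
        exact_mod_cast fiberF_card_pos T n (T.parent n w)
      exact div_pos h1 h2

lemma mu_ge (hd : 2 ≤ d) : ∀ n, ∀ v : T.V n, ((d:ℝ) ^ n)⁻¹ ≤ mu T n v
  | 0, v => by simp [mu]
  | (n+1), w => by
      have h1 := mu_ge hd n (T.parent n w)
      have hc0 : (0:ℝ) < ((fiberF T n (T.parent n w)).card : ℝ) := by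
        exact_mod_cast fiberF_card_pos T n (T.parent n w)
      have hcd : ((fiberF T n (T.parent n w)).card : ℝ) ≤ (d:ℝ) := by
        exact_mod_cast fiberF_card_le T n (T.parent n w)
      have hd0 : (0:ℝ) < (d:ℝ) := by exact_mod_cast (by omega : 0 < d)
      show ((d:ℝ) ^ (n+1))⁻¹ ≤ mu T n (T.parent n w) / ((fiberF T n (T.parent n w)).card : ℝ)
      have hmp := (mu_pos T n (T.parent n w)).le
      calc ((d:ℝ) ^ (n+1))⁻¹ = ((d:ℝ)^n)⁻¹ / d := by
            rw [pow_succ, mul_inv, div_eq_mul_inv]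
        _ ≤ mu T n (T.parent n w) / d := by gcongr
        _ ≤ mu T n (T.parent n w) / ((fiberF T n (T.parent n w)).card : ℝ) := by gcongr

end
end ArbAb
namespace ArbAb
open Finset
noncomputable section

variable {d : ℕ} (T : DaryTree d) (G : Subgroup (∀ n, Equiv.Perm (T.V n)))

/-! ### Part 11: potential identities -/

lemma sum_fiber (n : ℕ) (f : T.V (n+1) → ℝ) :
    ∑ v : T.V n, ∑ w ∈ fiberF T n v, f w = ∑ w : T.V (n+1), f w := by
  classical
  exact Finset.sum_fiberwise_of_maps_to (fun w _ => Finset.mem_univ (T.parent n w)) f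

lemma mu_fiber_sum (n : ℕ) (v : T.V n) : ∑ w ∈ fiberF T n v, mu T (n+1) w = mu T n v := by
  classical
  have hconst : ∀ w ∈ fiberF T n v,
      mu T (n+1) w = mu T n v / ((fiberF T n v).card : ℝ) := by
    intro w hw
    have hp : T.parent n w = v := (Finset.mem_filter.mp hw).2
    show mu T n (T.parent n w) / ((fiberF T n (T.parent n w)).card : ℝ) = _
    rw [hp]
  rw [Finset.sum_congr rfl hconst, Finset.sum_const, nsmul_eq_mul]
  have hc0 : ((fiberF T n v).card : ℝ) ≠ 0 := by
    have := fiberF_card_pos T n v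
    positivity
  field_simp

lemma Sk_succ (n : ℕ) : Sk T G (n+1) + Dk T G n = Sk T G n := by
  classical
  have hDk : Dk T G n = ∑ w : T.V (n+1),
      (if Moved T G n w then mu T (n+1) w * (2⁻¹ : ℝ) ^ (Mc T G (n+1) w) else 0) := by
    rw [Dk, movedF, Finset.sum_filter]
  have hS : Sk T G (n+1) + Dk T G n = ∑ w : T.V (n+1),
      (mu T (n+1) w * (2⁻¹ : ℝ) ^ (Mc T G (n+1) w) +
        (if Moved T G n w then mu T (n+1) w * (2⁻¹ : ℝ) ^ (Mc T G (n+1) w) else 0)) := by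
    rw [Sk, hDk, Finset.sum_add_distrib]
  rw [hS, ← sum_fiber T n, Sk]
  apply Finset.sum_congr rfl
  intro v _
  have hterm : ∀ w ∈ fiberF T n v,
      mu T (n+1) w * (2⁻¹ : ℝ) ^ (Mc T G (n+1) w) +
        (if Moved T G n w then mu T (n+1) w * (2⁻¹ : ℝ) ^ (Mc T G (n+1) w) else 0)
      = mu T (n+1) w * (2⁻¹ : ℝ) ^ (Mc T G n v) := by
    intro w hw
    have hp : T.parent n w = v := (Finset.mem_filter.mp hw).2
    have hM : Mc T G (n+1) w = Mc T G n v + (if Moved T G n w then 1 else 0) := by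
      show Mc T G n (T.parent n w) + _ = _
      rw [hp]
    by_cases hmw : Moved T G n w
    · rw [if_pos hmw] at hM ⊢
      rw [hM, pow_succ]
      ring
    · rw [if_neg hmw] at hM ⊢
      simp [hM]
  rw [Finset.sum_congr rfl hterm, ← Finset.sum_mul, mu_fiber_sum]

lemma Sk_zero : Sk T G 0 = 1 := by
  classical
  have hcard : Fintype.card (T.V 0) = 1 := by
    rw [← Nat.card_eq_fintype_card, T.root_card]
  rw [Sk]
  have : ∀ v : T.V 0, mu T 0 v * (2⁻¹ : ℝ) ^ (Mc T G 0 v) = 1 := by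
    intro v
    show (1:ℝ) * (2⁻¹ : ℝ) ^ (0:ℕ) = 1
    norm_num
  rw [Finset.sum_congr rfl (fun v _ => this v), Finset.sum_const, Finset.card_univ, hcard]
  norm_num

lemma Sk_nonneg (n : ℕ) : 0 ≤ Sk T G n := by
  apply Finset.sum_nonneg
  intro v _
  have := mu_pos T n v
  positivity

lemma Dk_nonneg (k : ℕ) : 0 ≤ Dk T G k := by
  apply Finset.sum_nonneg
  intro w _
  have := mu_pos T (k+1) w
  positivity

lemma Uk_nonneg (k : ℕ) : 0 ≤ Uk T G k := by
  apply Finset.sum_nonneg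
  intro w _
  positivity

lemma sum_Dk (n : ℕ) : ∑ k ∈ Finset.range n, Dk T G k = 1 - Sk T G n := by
  induction n with
  | zero => simp [Sk_zero]
  | succ n ih =>
    rw [Finset.sum_range_succ, ih]
    have := Sk_succ T G n
    linarith

lemma sum_Dk_le_one (n : ℕ) : ∑ k ∈ Finset.range n, Dk T G k ≤ 1 := by
  rw [sum_Dk]
  have := Sk_nonneg T G n
  linarith

lemma Uk_le (hd : 2 ≤ d) (k : ℕ) : Uk T G k ≤ (d:ℝ) ^ (k+1) * Dk T G k := by
  rw [Uk, Dk, Finset.mul_sum]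
  apply Finset.sum_le_sum
  intro w _
  have h1 : ((d:ℝ) ^ (k+1))⁻¹ ≤ mu T (k+1) w := mu_ge T hd (k+1) w
  have h2 : (0:ℝ) < (d:ℝ) ^ (k+1) := by
    have : (0:ℝ) < (d:ℝ) := by exact_mod_cast (by omega : 0 < d)
    positivity
  have h3 : (1:ℝ) ≤ (d:ℝ) ^ (k+1) * mu T (k+1) w := by
    have h4 := mul_le_mul_of_nonneg_left h1 h2.le
    rwa [mul_inv_cancel₀ (ne_of_gt h2)] at h4
  calc (2⁻¹ : ℝ) ^ (Mc T G (k+1) w)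
      = 1 * (2⁻¹ : ℝ) ^ (Mc T G (k+1) w) := by ring
    _ ≤ ((d:ℝ) ^ (k+1) * mu T (k+1) w) * (2⁻¹ : ℝ) ^ (Mc T G (k+1) w) := by
        apply mul_le_mul_of_nonneg_right h3
        positivity
    _ = (d:ℝ) ^ (k+1) * (mu T (k+1) w * (2⁻¹ : ℝ) ^ (Mc T G (k+1) w)) := by ring

end
end ArbAb
namespace ArbAb
open Finset
noncomputable section

variable {d : ℕ} {T : DaryTree d} {G : Subgroup (∀ n, Equiv.Perm (T.V n))}

/-! ### Part 12: counting active orbits -/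

lemma active_of_orb (hG : G ≤ T.aut) {k : ℕ} {v v' : T.V k}
    (ho : orb T G k v v') (ha : ActiveV T G k v) : ActiveV T G k v' := by
  obtain ⟨g, hgG, hgv⟩ := ho
  obtain ⟨w, hpw, π, hπG, hπtriv, hπw⟩ := ha
  refine ⟨g (k+1) w, ?_, g * π * g⁻¹, mul_mem (mul_mem hgG hπG) (inv_mem hgG), ?_, ?_⟩
  · rw [parent_apply hG hgG, hpw, hgv]
  · intro j hj
    have h1 : π j = 1 := hπtriv j hj
    show g j * (π j * (g j)⁻¹) = 1
    rw [h1, one_mul, mul_inv_cancel]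
  · show g (k+1) (π (k+1) ((g (k+1))⁻¹ (g (k+1) w))) ≠ g (k+1) w
    rw [Equiv.Perm.inv_eq_iff_eq.mpr rfl]
    intro hcon
    exact hπw (Equiv.injective _ hcon)

lemma aN_le_sum_active (hG : G ≤ T.aut) (hab : ∀ a ∈ G, ∀ b ∈ G, a * b = b * a)
    (k : ℕ) :
    (aN T G k : ℝ) ≤ ∑ v ∈ activeF T G k, (2⁻¹ : ℝ) ^ (Mc T G k v) := by
  classical
  have hmaps : ∀ v ∈ activeF T G k, orbF T G k v ∈ activeOrbs T G k := by
    intro v hv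
    exact Finset.mem_image_of_mem _ hv
  have hpart := Finset.sum_fiberwise_of_maps_to hmaps
    (fun v => (2⁻¹ : ℝ) ^ (Mc T G k v))
  rw [← hpart]
  have hone : ∀ z ∈ activeOrbs T G k,
      (1:ℝ) ≤ ∑ v ∈ (activeF T G k).filter (fun v => orbF T G k v = z),
        (2⁻¹ : ℝ) ^ (Mc T G k v) := by
    intro z hz
    obtain ⟨v₀, hv₀f, rfl⟩ := Finset.mem_image.mp hz
    have hv₀a : ActiveV T G k v₀ := (Finset.mem_filter.mp hv₀f).2
    have hfil : (activeF T G k).filter (fun v => orbF T G k v = orbF T G k v₀)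
        = orbF T G k v₀ := by
      ext v
      simp only [Finset.mem_filter, activeF, Finset.mem_univ, true_and]
      constructor
      · rintro ⟨-, hvz⟩
        rw [← hvz]
        exact self_mem_orbF T G v
      · intro hv
        have ho : orb T G k v₀ v := (mem_orbF T G).mp hv
        exact ⟨active_of_orb hG ho hv₀a, (orbF_eq_of_orb T G ho).symm⟩
    rw [hfil]
    have hcard : ∀ v ∈ orbF T G k v₀,
        ((orbF T G k v₀).card : ℝ)⁻¹ ≤ (2⁻¹ : ℝ) ^ (Mc T G k v) := by
      intro v hv
      have ho : orb T G k v₀ v := (mem_orbF T G).mp hv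
      have heq : orbF T G k v = orbF T G k v₀ := (orbF_eq_of_orb T G ho).symm
      have hle : 2 ^ (Mc T G k v) ≤ (orbF T G k v₀).card := by
        rw [← heq]
        exact two_pow_M_le_card_orb hG hab k v
      have h2 : ((2:ℝ) ^ (Mc T G k v))⁻¹ = (2⁻¹ : ℝ) ^ (Mc T G k v) := by
        rw [inv_pow]
      rw [← h2]
      apply inv_anti₀
      · positivity
      · exact_mod_cast hle
    calc (1:ℝ) = ((orbF T G k v₀).card : ℝ) * ((orbF T G k v₀).card : ℝ)⁻¹ := by
          have := orbF_card_pos T G v₀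
          field_simp
      _ = ∑ _v ∈ orbF T G k v₀, ((orbF T G k v₀).card : ℝ)⁻¹ := by
          rw [Finset.sum_const, nsmul_eq_mul]
      _ ≤ _ := Finset.sum_le_sum hcard
  calc (aN T G k : ℝ) = ∑ _z ∈ activeOrbs T G k, (1:ℝ) := by
        rw [Finset.sum_const, nsmul_eq_mul, mul_one, aN]
    _ ≤ _ := Finset.sum_le_sum hone

lemma sum_active_le_twice_Uk (k : ℕ) :
    ∑ v ∈ activeF T G k, (2⁻¹ : ℝ) ^ (Mc T G k v) ≤ 2 * Uk T G k := by
  classical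
  set cw : T.V k → T.V (k+1) := fun v =>
    if h : ∃ w, T.parent k w = v ∧ Moved T G k w then h.choose else Classical.arbitrary _
    with hcwdef
  have hcw : ∀ v ∈ activeF T G k, T.parent k (cw v) = v ∧ Moved T G k (cw v) := by
    intro v hv
    have h : ∃ w, T.parent k w = v ∧ Moved T G k w := (Finset.mem_filter.mp hv).2
    have : cw v = h.choose := by simp only [hcwdef]; exact dif_pos h
    rw [this]
    exact h.choose_spec
  have hMcw : ∀ v ∈ activeF T G k, Mc T G (k+1) (cw v) = Mc T G k v + 1 := by
    intro v hv
    obtain ⟨hp, hm⟩ := hcw v hv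
    show Mc T G k (T.parent k (cw v)) + _ = _
    rw [hp, if_pos hm]
  have hinj : ∀ v ∈ activeF T G k, ∀ v' ∈ activeF T G k, cw v = cw v' → v = v' := by
    intro v hv v' hv' heq
    rw [← (hcw v hv).1, ← (hcw v' hv').1, heq]
  have himage : ∀ w ∈ (activeF T G k).image cw, w ∈ movedF T G k := by
    intro w hw
    obtain ⟨v, hv, rfl⟩ := Finset.mem_image.mp hw
    exact Finset.mem_filter.mpr ⟨Finset.mem_univ _, (hcw v hv).2⟩
  calc ∑ v ∈ activeF T G k, (2⁻¹ : ℝ) ^ (Mc T G k v)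
      = ∑ v ∈ activeF T G k, 2 * (2⁻¹ : ℝ) ^ (Mc T G (k+1) (cw v)) := by
        apply Finset.sum_congr rfl
        intro v hv
        rw [hMcw v hv, pow_succ]
        ring
    _ = 2 * ∑ v ∈ activeF T G k, (2⁻¹ : ℝ) ^ (Mc T G (k+1) (cw v)) := by
        rw [Finset.mul_sum]
    _ = 2 * ∑ w ∈ (activeF T G k).image cw, (2⁻¹ : ℝ) ^ (Mc T G (k+1) w) := by
        rw [Finset.sum_image hinj]
    _ ≤ 2 * Uk T G k := by
        apply mul_le_mul_of_nonneg_left _ (by norm_num : (0:ℝ) ≤ 2)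
        apply Finset.sum_le_sum_of_subset_of_nonneg
        · intro w hw; exact himage w hw
        · intro w _ _; positivity

lemma aN_le_twice_Uk (hG : G ≤ T.aut) (hab : ∀ a ∈ G, ∀ b ∈ G, a * b = b * a) (k : ℕ) :
    (aN T G k : ℝ) ≤ 2 * Uk T G k :=
  le_trans (aN_le_sum_active hG hab k) (sum_active_le_twice_Uk k)

end
end ArbAb
namespace ArbAb
open Finset Filter
noncomputable section

variable {d : ℕ} (T : DaryTree d) (G : Subgroup (∀ n, Equiv.Perm (T.V n)))

/-! ### Part 13: the tail estimate -/

lemma SU_tail (hd : 2 ≤ d) {ε : ℝ} (hε : 0 < ε) :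
    ∃ r : ℕ, ∀ n, r ≤ n →
      ∑ k ∈ Finset.range n, Uk T G k ≤ (∑ k ∈ Finset.range r, Uk T G k) + (d:ℝ)^n * ε := by
  classical
  set P : ℕ → ℝ := fun n => ∑ k ∈ Finset.range n, Dk T G k with hP
  have hPbdd : BddAbove (Set.range P) := by
    refine ⟨1, ?_⟩
    rintro x ⟨n, rfl⟩
    exact sum_Dk_le_one T G n
  set Psup := ⨆ n, P n with hPsup
  have hPle : ∀ n, P n ≤ Psup := fun n => le_ciSup hPbdd n
  have hex : ∃ r, Psup - ε < P r := by
    have : Psup - ε < Psup := by linarith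
    obtain ⟨r, hr⟩ := exists_lt_of_lt_ciSup this
    exact ⟨r, hr⟩
  obtain ⟨r, hr⟩ := hex
  refine ⟨r, fun n hn => ?_⟩
  have hsplit : ∑ k ∈ Finset.range n, Uk T G k
      = (∑ k ∈ Finset.range r, Uk T G k) + ∑ k ∈ Finset.Ico r n, Uk T G k := by
    rw [Finset.sum_range_add_sum_Ico _ hn]
  rw [hsplit]
  have hd1 : (1:ℝ) ≤ (d:ℝ) := by exact_mod_cast (by omega : 1 ≤ d)
  have hbound : ∑ k ∈ Finset.Ico r n, Uk T G k ≤ (d:ℝ)^n * ∑ k ∈ Finset.Ico r n, Dk T G k := by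
    rw [Finset.mul_sum]
    apply Finset.sum_le_sum
    intro k hk
    have hk2 : k + 1 ≤ n := (Finset.mem_Ico.mp hk).2
    calc Uk T G k ≤ (d:ℝ)^(k+1) * Dk T G k := Uk_le T G hd k
      _ ≤ (d:ℝ)^n * Dk T G k := by
          apply mul_le_mul_of_nonneg_right _ (Dk_nonneg T G k)
          exact pow_le_pow_right₀ hd1 hk2
  have hPn : ∑ k ∈ Finset.Ico r n, Dk T G k = P n - P r := by
    have := Finset.sum_range_add_sum_Ico (fun k => Dk T G k) hn
    simp only [hP]
    linarith
  have htail : ∑ k ∈ Finset.Ico r n, Dk T G k ≤ ε := by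
    rw [hPn]
    have := hPle n
    linarith
  have hdn : (0:ℝ) ≤ (d:ℝ)^n := by positivity
  have := mul_le_mul_of_nonneg_left htail hdn
  linarith

lemma tendsto_SU (hd : 2 ≤ d) :
    Tendsto (fun n => (∑ k ∈ Finset.range n, Uk T G k) / (d:ℝ)^n) atTop (nhds 0) := by
  rw [Metric.tendsto_atTop]
  intro ε hε
  obtain ⟨r, hr⟩ := SU_tail T G hd (show (0:ℝ) < ε/4 by linarith)
  have hd1 : (1:ℝ) < (d:ℝ) := by exact_mod_cast (by omega : 1 < d)
  set C := ∑ k ∈ Finset.range r, Uk T G k with hC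
  have hC0 : 0 ≤ C := Finset.sum_nonneg (fun k _ => Uk_nonneg T G k)
  have hev : ∀ᶠ n in atTop, (C + 1) / (ε/4) ≤ (d:ℝ)^n :=
    (tendsto_pow_atTop_atTop_of_one_lt hd1).eventually_ge_atTop _
  rw [Filter.eventually_atTop] at hev
  obtain ⟨N₀, hN₀⟩ := hev
  refine ⟨max r N₀, fun n hn => ?_⟩
  have hnr : r ≤ n := le_trans (le_max_left _ _) hn
  have hnN : N₀ ≤ n := le_trans (le_max_right _ _) hn
  have h1 := hr n hnr
  have hdn : (0:ℝ) < (d:ℝ)^n := by positivity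
  have hSU0 : 0 ≤ ∑ k ∈ Finset.range n, Uk T G k :=
    Finset.sum_nonneg (fun k _ => Uk_nonneg T G k)
  rw [Real.dist_eq, sub_zero, abs_of_nonneg (by positivity)]
  have h2 : (∑ k ∈ Finset.range n, Uk T G k) / (d:ℝ)^n ≤ C / (d:ℝ)^n + ε/4 := by
    rw [div_le_iff₀ hdn]
    have : (C / (d:ℝ)^n + ε/4) * (d:ℝ)^n = C + ε/4 * (d:ℝ)^n := by
      field_simp
    rw [this]
    linarith
  have h3 : C / (d:ℝ)^n ≤ ε/4 := by
    rw [div_le_iff₀ hdn]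
    have h4 := hN₀ n hnN
    have h5 : (C+1) ≤ ε/4 * (d:ℝ)^n := by
      rw [div_le_iff₀ (show (0:ℝ) < ε/4 by linarith)] at h4
      linarith [h4]
    linarith
  linarith

end
end ArbAb
open ArbAb Filter in
/-- **Abelian subgroups of the automorphism group of an infinite `d`-ary rooted tree
have vanishing Minkowski dimension**: the Minkowski dimension of the closure of an
abelian subgroup `G ≤ Aut(T)` exists and equals `0`. -/
theorem arboreal_abelian_small {d : ℕ} (hd : 2 ≤ d) (T : DaryTree d)
    (G : Subgroup (∀ n, Equiv.Perm (T.V n))) (hGsub : G ≤ T.aut)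
    (hab : ∀ a ∈ G, ∀ b ∈ G, a * b = b * a) :
    HasDim d (distClosure d (G : Set (∀ n, Equiv.Perm (T.V n)))) 0 := by
  classical
  have hd0 : (0:ℝ) < (d:ℝ) := by exact_mod_cast (by omega : 0 < d)
  have hfac1 : (1:ℝ) < (Nat.factorial d : ℝ) := ArbAb.one_lt_factorial_real hd
  have hlogfac : 0 < Real.log (Nat.factorial d) := Real.log_pos hfac1
  have hlogP : 0 ≤ Real.log ((d:ℝ)^d) :=
    Real.log_nonneg (one_le_pow₀ (by exact_mod_cast (by omega : 1 ≤ d)))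
  set f : ℕ → ℝ := fun n =>
    Real.log (coverNum d (distClosure d (G : Set (∀ n, Equiv.Perm (T.V n)))) n : ℝ) /
      Real.log (1 / treeScale d n) with hf
  have hlow : ∀ n, 0 ≤ f n := by
    intro n
    apply div_nonneg
    · rcases Nat.eq_zero_or_pos
        (coverNum d (distClosure d (G : Set (∀ n, Equiv.Perm (T.V n)))) n) with h | h
      · rw [h]; simp
      · apply Real.log_nonneg; exact_mod_cast h
    · rw [one_div, Real.log_inv]
      exact neg_nonneg.mpr (Real.log_nonpos (treeScale_pos hd n).le (treeScale_le_one hd n))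
  set SU : ℕ → ℝ := fun n => ∑ k ∈ Finset.range n, ArbAb.Uk T G k with hSU
  set Cst : ℝ := 2 * d * Real.log ((d:ℝ)^d) / Real.log (Nat.factorial d) with hCst
  have hCst0 : 0 ≤ Cst := by
    apply div_nonneg _ hlogfac.le
    positivity
  have hupper : ∀ n, 1 ≤ n → f n ≤ Cst * (SU n / (d:ℝ)^n) := by
    intro n hn
    obtain ⟨m, rfl⟩ : ∃ m, n = m + 1 := ⟨n - 1, by omega⟩
    set A : ℕ := ∑ k ∈ Finset.range (m+1), ArbAb.aN T G k with hA
    have step1 : coverNum d (distClosure d (G : Set (∀ n, Equiv.Perm (T.V n)))) (m+1)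
        ≤ (d^d)^A := le_trans (coverNum_le_LN hd (m+1)) (LN_le hGsub hab hd (m+1))
    have step2 : Real.log (coverNum d
          (distClosure d (G : Set (∀ n, Equiv.Perm (T.V n)))) (m+1) : ℝ)
        ≤ (A:ℝ) * Real.log ((d:ℝ)^d) := by
      rcases Nat.eq_zero_or_pos
          (coverNum d (distClosure d (G : Set (∀ n, Equiv.Perm (T.V n)))) (m+1)) with h | h
      · rw [h]
        simp only [Nat.cast_zero, Real.log_zero]
        positivity
      · have hcast : ((coverNum d (distClosure d
            (G : Set (∀ n, Equiv.Perm (T.V n)))) (m+1) : ℕ) : ℝ) ≤ ((d:ℝ)^d)^A := by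
          have := step1
          exact_mod_cast this
        calc Real.log _ ≤ Real.log (((d:ℝ)^d)^A) := by
              apply Real.log_le_log _ hcast
              exact_mod_cast h
          _ = (A:ℝ) * Real.log ((d:ℝ)^d) := by rw [Real.log_pow]
    have step3 : Real.log (1 / treeScale d (m+1))
        = (scaleExp d (m+1) : ℝ) * Real.log (Nat.factorial d) := by
      rw [one_div, treeScale, inv_inv, Real.log_pow]
    have hsE : ((d:ℝ)^m) ≤ (scaleExp d (m+1) : ℝ) := by
      exact_mod_cast ArbAb.scaleExp_ge (d := d) (n := m+1) (by omega)
    have hsE0 : (0:ℝ) < (scaleExp d (m+1) : ℝ) := lt_of_lt_of_le (by positivity) hsE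
    have hAle : (A:ℝ) ≤ 2 * SU (m+1) := by
      rw [hA, hSU]
      push_cast
      rw [Finset.mul_sum]
      apply Finset.sum_le_sum
      intro k _
      exact aN_le_twice_Uk hGsub hab k
    have hA0 : (0:ℝ) ≤ (A:ℝ) := Nat.cast_nonneg A
    have step4 : f (m+1) ≤ ((A:ℝ) * Real.log ((d:ℝ)^d)) /
        ((scaleExp d (m+1) : ℝ) * Real.log (Nat.factorial d)) := by
      show Real.log _ / Real.log (1 / treeScale d (m+1)) ≤ _
      rw [step3]
      have hpos : (0:ℝ) < (scaleExp d (m+1) : ℝ) * Real.log (Nat.factorial d) := by positivity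
      exact (div_le_div_iff_of_pos_right hpos).mpr step2
    have step5 : ((A:ℝ) * Real.log ((d:ℝ)^d)) /
          ((scaleExp d (m+1) : ℝ) * Real.log (Nat.factorial d))
        ≤ ((2 * SU (m+1)) * Real.log ((d:ℝ)^d)) /
          (((d:ℝ)^m) * Real.log (Nat.factorial d)) := by
      have hnum : (A:ℝ) * Real.log ((d:ℝ)^d) ≤ (2 * SU (m+1)) * Real.log ((d:ℝ)^d) :=
        mul_le_mul_of_nonneg_right hAle hlogP
      have hden : ((d:ℝ)^m) * Real.log (Nat.factorial d)
          ≤ (scaleExp d (m+1) : ℝ) * Real.log (Nat.factorial d) :=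
        mul_le_mul_of_nonneg_right hsE hlogfac.le
      have hden0 : (0:ℝ) < ((d:ℝ)^m) * Real.log (Nat.factorial d) := by positivity
      have hSU0 : (0:ℝ) ≤ SU (m+1) := Finset.sum_nonneg (fun k _ => ArbAb.Uk_nonneg T G k)
      exact div_le_div₀ (mul_nonneg (by positivity) hlogP) hnum hden0 hden
    have step6 : ((2 * SU (m+1)) * Real.log ((d:ℝ)^d)) /
          (((d:ℝ)^m) * Real.log (Nat.factorial d))
        = Cst * (SU (m+1) / (d:ℝ)^(m+1)) := by
      rw [hCst]
      have hdm : ((d:ℝ)^(m+1)) = (d:ℝ)^m * d := pow_succ (d:ℝ) m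
      rw [hdm]
      field_simp
    calc f (m+1) ≤ _ := step4
      _ ≤ _ := step5
      _ = _ := step6
  have htend0 : Tendsto (fun n => SU n / (d:ℝ)^n) atTop (nhds 0) := tendsto_SU T G hd
  have htend : Tendsto (fun n => Cst * (SU n / (d:ℝ)^n)) atTop (nhds 0) := by
    have := htend0.const_mul Cst
    simpa using this
  have hmain : Tendsto f atTop (nhds 0) :=
    tendsto_of_tendsto_of_tendsto_of_le_of_le' tendsto_const_nhds htend
      (Filter.Eventually.of_forall hlow) (Filter.eventually_atTop.mpr ⟨1, hupper⟩)
  exact ⟨hmain.liminf_eq, hmain.limsup_eq⟩
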